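/- Let A be an n×n symmetric matrix and write a unit vector v as v = α·x̃ + z with z ⊥ x̃, where x̃ is a unit vector supported on a set S of size k whose nonzero entries all satisfy |x̃_i| ≥ μ√(1−δ)/√k, and α² ≥ 1−δ. Let S′ be the set of indices of the k largest entries of v in absolute value. Then |S′ ∩ S| ≥ (1 − 2δ/(μ²(1−δ)))·k. -/
import Mathlib

private lemma key_ineq (α P Q R C : ℝ) (hQ0 : 0 ≤ Q) (hQ1 : Q ≤ 1) (hR : 0 ≤ R) (hC : 0 ≤ C)
    (h2 : P ^ 2 ≤ R * Q) (h3 : P ^ 2 ≤ C * (1 - Q))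
    (h1 : α ^ 2 * Q + 2 * α * P + 2 * R + C ≤ 1 - α ^ 2) : Q ≤ 2 * (1 - α ^ 2) := by
  have hE : 0 ≤ 2 * α * P * (2 - Q) + 2 * R * (2 - Q) + C * (2 - Q) + α ^ 2 * Q * (1 - Q) := by
    rcases eq_or_lt_of_le hQ0 with h0 | h0
    · have hP : P = 0 := by nlinarith [sq_nonneg P]
      subst hP
      nlinarith
    rcases eq_or_lt_of_le hQ1 with h1' | h1'
    · have hP : P = 0 := by nlinarith [sq_nonneg P]
      subst hP
      nlinarith
    · nlinarith [sq_nonneg (α * Q * (1 - Q) + P * (2 - Q)),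
        mul_pos h0 (by linarith : (0:ℝ) < 1 - Q),
        mul_nonneg (mul_nonneg (by linarith : (0:ℝ) ≤ 2 - Q) (by linarith : (0:ℝ) ≤ 1 - Q))
          (by linarith : 0 ≤ R * Q - P ^ 2),
        mul_nonneg (mul_nonneg (by linarith : (0:ℝ) ≤ 2 - Q) hQ0)
          (by linarith : 0 ≤ C * (1 - Q) - P ^ 2)]
  nlinarith [mul_le_mul_of_nonneg_left h1 (by linarith : (0:ℝ) ≤ 2 - Q)]

private lemma sum_le_sum_of_card_eq {ι : Type*} {A B : Finset ι} (f g : ι → ℝ)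
    (hcard : A.card = B.card) (h : ∀ a ∈ A, ∀ b ∈ B, g b ≤ f a) :
    ∑ b ∈ B, g b ≤ ∑ a ∈ A, f a := by
  rcases A.eq_empty_or_nonempty with hA | hA
  · have hB : B = ∅ := Finset.card_eq_zero.mp (by rw [← hcard, hA, Finset.card_empty])
    simp [hA, hB]
  · have h1 : ∑ b ∈ B, g b ≤ B.card • A.inf' hA f := by
      apply Finset.sum_le_card_nsmul
      intro b hb
      exact Finset.le_inf' hA f fun a ha => h a ha b hb
    have h2 : A.card • A.inf' hA f ≤ ∑ a ∈ A, f a :=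
      Finset.card_nsmul_le_sum A f _ fun a ha => Finset.inf'_le f ha
    rw [← hcard] at h1
    linarith

theorem support_recovery (n k : ℕ) (hk : 1 ≤ k)
    (δ μ α : ℝ) (hδ0 : 0 < δ) (hδ1 : δ < 1) (hμ : 0 < μ)
    (v xt z : Fin n → ℝ)
    (S S' : Finset (Fin n))
    (hScard : S.card = k)
    (hxt_supp : ∀ i ∉ S, xt i = 0)
    (hxt_unit : ∑ i, xt i ^ 2 = 1)
    (hxt_low : ∀ i ∈ S, μ * Real.sqrt (1 - δ) / Real.sqrt k ≤ |xt i|)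
    (hv_unit : ∑ i, v i ^ 2 = 1)
    (hdecomp : ∀ i, v i = α * xt i + z i)
    (hperp : ∑ i, z i * xt i = 0)
    (hα : 1 - δ ≤ α ^ 2)
    (hS'card : S'.card = k)
    (hS'top : ∀ i ∈ S', ∀ j ∉ S', |v j| ≤ |v i|) :
    (1 - 2 * δ / (μ ^ 2 * (1 - δ))) * (k : ℝ) ≤ ((S' ∩ S).card : ℝ) := by
  classical
  have hδ1' : (0:ℝ) < 1 - δ := by linarith
  have hkpos : (0:ℝ) < k := by exact_mod_cast hk
  set T1 : Finset (Fin n) := S' \ S with hT1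
  set T2 : Finset (Fin n) := S \ S' with hT2
  set I : Finset (Fin n) := S ∩ S' with hI
  set Q : ℝ := ∑ i ∈ T2, xt i ^ 2 with hQ
  set P : ℝ := ∑ i ∈ T2, z i * xt i with hP
  set R : ℝ := ∑ i ∈ T2, z i ^ 2 with hRdef
  set C : ℝ := ∑ i ∈ I, z i ^ 2 with hCdef
  -- sums over S equal sums over univ for functions vanishing off S
  have hsum_xt : ∑ i ∈ S, xt i ^ 2 = 1 := by
    rw [← hxt_unit]
    exact Finset.sum_subset (Finset.subset_univ S) (fun i _ hi => by rw [hxt_supp i hi]; ring)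
  have hsum_zxt : ∑ i ∈ S, z i * xt i = 0 := by
    rw [← hperp]
    exact Finset.sum_subset (Finset.subset_univ S) (fun i _ hi => by rw [hxt_supp i hi]; ring)
  -- split S into T2 ∪ I
  have hsplit : ∀ f : Fin n → ℝ, ∑ i ∈ S, f i = ∑ i ∈ T2, f i + ∑ i ∈ I, f i := by
    intro f
    rw [hT2, hI]
    rw [← Finset.sum_union (Finset.disjoint_sdiff_inter S S')]
    congr 1
    exact (Finset.sdiff_union_inter S S').symm
  have hIxt : ∑ i ∈ I, xt i ^ 2 = 1 - Q := by
    have := hsplit (fun i => xt i ^ 2); rw [hsum_xt] at this; linarith [this]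
  have hIzxt : ∑ i ∈ I, z i * xt i = -P := by
    have := hsplit (fun i => z i * xt i); rw [hsum_zxt] at this; linarith [this]
  -- norm of z
  have hznorm : ∑ i, z i ^ 2 = 1 - α ^ 2 := by
    have h1 : ∑ i, v i ^ 2
        = α ^ 2 * (∑ i, xt i ^ 2) + 2 * α * (∑ i, z i * xt i) + ∑ i, z i ^ 2 := by
      rw [Finset.mul_sum, Finset.mul_sum, ← Finset.sum_add_distrib, ← Finset.sum_add_distrib]
      apply Finset.sum_congr rfl
      intro i _
      rw [hdecomp i]; ring
    rw [hxt_unit, hperp, hv_unit] at h1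
    linarith
  -- basic nonnegativity / bounds
  have hQ0 : 0 ≤ Q := Finset.sum_nonneg fun i _ => sq_nonneg _
  have hR0 : 0 ≤ R := Finset.sum_nonneg fun i _ => sq_nonneg _
  have hC0 : 0 ≤ C := Finset.sum_nonneg fun i _ => sq_nonneg _
  have hQ1 : Q ≤ 1 := by
    rw [← hsum_xt, hsplit (fun i => xt i ^ 2)]
    have : 0 ≤ ∑ i ∈ I, xt i ^ 2 := Finset.sum_nonneg fun i _ => sq_nonneg _
    linarith
  -- Cauchy-Schwarz
  have h2 : P ^ 2 ≤ R * Q := Finset.sum_mul_sq_le_sq_mul_sq T2 z xt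
  have h3 : P ^ 2 ≤ C * (1 - Q) := by
    have := Finset.sum_mul_sq_le_sq_mul_sq I z xt
    rw [hIzxt, hIxt] at this
    calc P ^ 2 = (-P) ^ 2 := by ring
    _ ≤ C * (1 - Q) := this
  -- pairing: sum of z² over T1 dominates sum of v² over T2
  have hcards : T1.card = T2.card := by
    have e1 : (S' ∩ S).card + T1.card = k := by
      rw [hT1, ← hS'card]; exact Finset.card_inter_add_card_sdiff S' S
    have e2 : (S' ∩ S).card + T2.card = k := by
      rw [hT2, ← hScard, Finset.inter_comm]; exact Finset.card_inter_add_card_sdiff S S'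
    omega
  have hpair : ∑ j ∈ T2, v j ^ 2 ≤ ∑ i ∈ T1, z i ^ 2 := by
    apply sum_le_sum_of_card_eq _ _ hcards
    intro a ha b hb
    have haS' : a ∈ S' := (Finset.mem_sdiff.mp ha).1
    have haS : a ∉ S := (Finset.mem_sdiff.mp ha).2
    have hbS' : b ∉ S' := (Finset.mem_sdiff.mp hb).2
    have hva : v a = z a := by rw [hdecomp a, hxt_supp a haS]; ring
    have := hS'top a haS' b hbS'
    rw [hva] at this
    calc v b ^ 2 = |v b| ^ 2 := (sq_abs _).symm
    _ ≤ |z a| ^ 2 := by apply pow_le_pow_left₀ (abs_nonneg _) this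
    _ = z a ^ 2 := sq_abs _
  have hT2v : ∑ j ∈ T2, v j ^ 2 = α ^ 2 * Q + 2 * α * P + R := by
    rw [hQ, hP, hRdef, Finset.mul_sum, Finset.mul_sum, ← Finset.sum_add_distrib,
      ← Finset.sum_add_distrib]
    apply Finset.sum_congr rfl
    intro i _
    rw [hdecomp i]; ring
  -- the three disjoint pieces fit inside the total z norm
  have h1 : α ^ 2 * Q + 2 * α * P + 2 * R + C ≤ 1 - α ^ 2 := by
    have hd12 : Disjoint T1 T2 := disjoint_sdiff_sdiff
    have hd1I : Disjoint T1 I := by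
      rw [hT1, hI]
      exact Finset.disjoint_of_subset_right (Finset.inter_subset_left) Finset.sdiff_disjoint
    have hd2I : Disjoint T2 I := by
      rw [hT2, hI]
      exact Finset.disjoint_of_subset_right
        (Finset.inter_subset_right) Finset.sdiff_disjoint
    have hsub : ∑ i ∈ T1 ∪ T2 ∪ I, z i ^ 2 ≤ ∑ i, z i ^ 2 :=
      Finset.sum_le_sum_of_subset_of_nonneg (Finset.subset_univ _)
        (fun i _ _ => sq_nonneg _)
    rw [Finset.sum_union (by
        rw [Finset.disjoint_union_left]; exact ⟨hd1I, hd2I⟩),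
      Finset.sum_union hd12, hznorm] at hsub
    have := hpair
    rw [hT2v] at this
    linarith
  -- key inequality
  have hQle : Q ≤ 2 * (1 - α ^ 2) := key_ineq α P Q R C hQ0 hQ1 hR0 hC0 h2 h3 h1
  have hQδ : Q ≤ 2 * δ := by linarith
  -- lower bound on Q from the entry sizes
  have hm : (μ * Real.sqrt (1 - δ) / Real.sqrt k) ^ 2 = μ ^ 2 * (1 - δ) / k := by
    rw [div_pow, mul_pow, Real.sq_sqrt (le_of_lt hδ1'), Real.sq_sqrt (le_of_lt hkpos)]
  have hQlow : (T2.card : ℝ) * (μ ^ 2 * (1 - δ) / k) ≤ Q := by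
    have := Finset.card_nsmul_le_sum T2 (fun i => xt i ^ 2)
      ((μ * Real.sqrt (1 - δ) / Real.sqrt k) ^ 2) (fun i hi => by
        have hiS : i ∈ S := (Finset.mem_sdiff.mp hi).1
        have h := hxt_low i hiS
        calc (μ * Real.sqrt (1 - δ) / Real.sqrt k) ^ 2 ≤ |xt i| ^ 2 := by
              apply pow_le_pow_left₀ _ h
              positivity
        _ = xt i ^ 2 := sq_abs _)
    rw [hm, nsmul_eq_mul] at this
    exact this
  -- wrap up
  have hμδ : (0:ℝ) < μ ^ 2 * (1 - δ) := by positivity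
  have hcardT2 : (T2.card : ℝ) = (k : ℝ) - ((S' ∩ S).card : ℝ) := by
    have e2 : (S' ∩ S).card + T2.card = k := by
      rw [hT2, ← hScard, Finset.inter_comm]; exact Finset.card_inter_add_card_sdiff S S'
    have : ((S' ∩ S).card : ℝ) + (T2.card : ℝ) = (k : ℝ) := by exact_mod_cast e2
    linarith
  have hN : ((k : ℝ) - ((S' ∩ S).card : ℝ)) * (μ ^ 2 * (1 - δ)) ≤ 2 * δ * k := by
    rw [← hcardT2]
    have h4 : (T2.card : ℝ) * (μ ^ 2 * (1 - δ) / ↑k) * ↑k ≤ 2 * δ * ↑k :=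
      mul_le_mul_of_nonneg_right (hQlow.trans hQδ) hkpos.le
    have h5 : (T2.card : ℝ) * (μ ^ 2 * (1 - δ) / ↑k) * ↑k = ↑T2.card * (μ ^ 2 * (1 - δ)) := by
      field_simp
    linarith [h4, h5.symm.trans_le h4]
  have hfinal : (k : ℝ) - ((S' ∩ S).card : ℝ) ≤ 2 * δ * k / (μ ^ 2 * (1 - δ)) := by
    rw [le_div_iff₀ hμδ]; exact hN
  have heq : (1 - 2 * δ / (μ ^ 2 * (1 - δ))) * (k : ℝ)
      = (k : ℝ) - 2 * δ * k / (μ ^ 2 * (1 - δ)) := by ring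
  rw [heq]
  linarith [hfinal]
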